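/- Let u, v ∈ ℤ² be linearly independent, S = {0, u, v}, and -S = {0, -u, -v}. Then π({S, -S}) = 1/3. -/

import Mathlib

/-- A shooting pattern `X` hits a ship `S` in `ℤ²` if every translate of `S` intersects `X`. -/
def Hits2 (X S : Set (ℤ × ℤ)) : Prop := ∀ n : ℤ × ℤ, ∃ s ∈ S, n + s ∈ X

/-- Lower asymptotic density of a set in `ℤ²`. -/
noncomputable def lowerDensity2 (X : Set (ℤ × ℤ)) : ℝ :=
  Filter.liminf (fun N : ℕ =>
    ((X ∩ Set.Icc (-(N:ℤ), -(N:ℤ)) ((N:ℤ), (N:ℤ))).ncard : ℝ) / (2 * N + 1) ^ 2)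
    Filter.atTop

/-- Optimal piercing density of a family of ships in `ℤ²`. -/
noncomputable def piercing2 (F : Set (Set (ℤ × ℤ))) : ℝ :=
  sInf (lowerDensity2 '' {X | ∀ S ∈ F, Hits2 X S})

namespace Stmt15Aux

open Filter Set

/-! ### Boxes -/

noncomputable def boxZ (N : ℕ) : Set (ℤ × ℤ) := Set.Icc (-(N:ℤ), -(N:ℤ)) ((N:ℤ), (N:ℤ))

lemma boxZ_eq (N : ℕ) : boxZ N = ↑(Finset.Icc (-(N:ℤ), -(N:ℤ)) ((N:ℤ), (N:ℤ))) := by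
  simp [boxZ]

lemma boxZ_finite (N : ℕ) : (boxZ N).Finite := by
  rw [boxZ_eq]; exact (Finset.Icc _ _).finite_toSet

lemma boxZ_ncard (N : ℕ) : (boxZ N).ncard = (2*N+1)^2 := by
  rw [boxZ_eq, Set.ncard_coe_finset, Finset.Icc_prod_def]
  simp only [Finset.card_product, Int.card_Icc]
  have : ((N:ℤ) + 1 - -(N:ℤ)).toNat = 2*N+1 := by omega
  rw [this]; ring

lemma mem_boxZ {N : ℕ} {p : ℤ × ℤ} :
    p ∈ boxZ N ↔ -(N:ℤ) ≤ p.1 ∧ p.1 ≤ N ∧ -(N:ℤ) ≤ p.2 ∧ p.2 ≤ N := by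
  rw [boxZ, Set.mem_Icc, Prod.le_def, Prod.le_def]
  tauto

lemma translate_le (X : Set (ℤ×ℤ)) (s : ℤ×ℤ) (R N : ℕ) (h1 : |s.1| ≤ (R:ℤ)) (h2 : |s.2| ≤ (R:ℤ)) :
    ({p | p + s ∈ X} ∩ boxZ N).ncard ≤ (X ∩ boxZ (N+R)).ncard := by
  have hinj : Function.Injective (fun p : ℤ×ℤ => p + s) := fun a b h => by
    simpa using congrArg (· - s) h
  have himg : (fun p : ℤ×ℤ => p + s) '' ({p | p + s ∈ X} ∩ boxZ N) ⊆ X ∩ boxZ (N+R) := by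
    rintro _ ⟨p, ⟨hp1, hp2⟩, rfl⟩
    refine ⟨hp1, ?_⟩
    rw [mem_boxZ] at hp2 ⊢
    rw [abs_le] at h1 h2
    simp only [Prod.fst_add, Prod.snd_add]
    push_cast
    obtain ⟨a1,a2,a3,a4⟩ := hp2
    refine ⟨by linarith [h1.1], by linarith [h1.2], by linarith [h2.1], by linarith [h2.2]⟩
  calc ({p | p + s ∈ X} ∩ boxZ N).ncard
      = ((fun p : ℤ×ℤ => p + s) '' ({p | p + s ∈ X} ∩ boxZ N)).ncard :=
        (Set.ncard_image_of_injective _ hinj).symm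
    _ ≤ (X ∩ boxZ (N+R)).ncard :=
        Set.ncard_le_ncard himg ((boxZ_finite (N+R)).subset (Set.inter_subset_right))

lemma translate_ge (X : Set (ℤ×ℤ)) (s : ℤ×ℤ) (R N : ℕ) (h1 : |s.1| ≤ (R:ℤ)) (h2 : |s.2| ≤ (R:ℤ)) :
    (X ∩ boxZ N).ncard ≤ ({p | p + s ∈ X} ∩ boxZ (N+R)).ncard := by
  have key := translate_le {p | p + s ∈ X} (-s) R N (by simpa using h1) (by simpa using h2)
  have : {p : ℤ×ℤ | p + -s ∈ {p | p + s ∈ X}} = X := by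
    ext p; simp [Set.mem_setOf_eq]
  rwa [this] at key

/-! ### The coloring `psiZ` -/

noncomputable def repZ (u v : ℤ × ℤ) (p : ℤ × ℤ) : ℤ × ℤ :=
  (Submodule.Quotient.mk (p := Submodule.span ℤ ({u, v} : Set (ℤ × ℤ))) p).out

noncomputable def psiZ (u v : ℤ × ℤ) (p : ℤ × ℤ) : ZMod 3 :=
  ((((p - repZ u v p).1 * v.2 - (p - repZ u v p).2 * v.1
     - (u.1 * (p - repZ u v p).2 - u.2 * (p - repZ u v p).1)) / (u.1*v.2 - u.2*v.1) : ℤ) : ZMod 3)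

variable {u v : ℤ × ℤ}

lemma repZ_sub_mem (p : ℤ × ℤ) : p - repZ u v p ∈ Submodule.span ℤ ({u, v} : Set (ℤ × ℤ)) := by
  rw [← Submodule.Quotient.eq]
  exact (Quotient.out_eq _).symm

lemma repZ_add (p w : ℤ × ℤ) (hw : w ∈ Submodule.span ℤ ({u, v} : Set (ℤ × ℤ))) :
    repZ u v (p + w) = repZ u v p := by
  unfold repZ
  congr 1
  rw [Submodule.Quotient.eq]
  simpa using hw

lemma psiZ_add (hD : u.1*v.2 - u.2*v.1 ≠ 0) (p : ℤ × ℤ) (a b : ℤ) :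
    psiZ u v (p + (a • u + b • v)) = psiZ u v p + a - b := by
  have hw : a • u + b • v ∈ Submodule.span ℤ ({u, v} : Set (ℤ × ℤ)) :=
    Submodule.mem_span_pair.mpr ⟨a, b, rfl⟩
  obtain ⟨c, d, hcd⟩ := Submodule.mem_span_pair.mp (repZ_sub_mem (u := u) (v := v) p)
  have hrep : repZ u v (p + (a • u + b • v)) = repZ u v p := repZ_add p _ hw
  set r := repZ u v p with hr
  have h1 : p - r = c • u + d • v := hcd.symm
  have h2 : p + (a • u + b • v) - r = (c+a) • u + (d+b) • v := by
    rw [add_sub_right_comm, h1]; module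
  unfold psiZ
  rw [hrep, ← hr, h1, h2]
  have key : ∀ x y : ℤ, ((x • u + y • v).1 * v.2 - (x • u + y • v).2 * v.1
      - (u.1 * (x • u + y • v).2 - u.2 * (x • u + y • v).1)) / (u.1*v.2 - u.2*v.1) = x - y := by
    intro x y
    have : (x • u + y • v).1 * v.2 - (x • u + y • v).2 * v.1
        - (u.1 * (x • u + y • v).2 - u.2 * (x • u + y • v).1) = (x - y) * (u.1*v.2 - u.2*v.1) := by
      simp only [Prod.fst_add, Prod.snd_add, Prod.smul_fst, Prod.smul_snd, smul_eq_mul]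
      ring
    rw [this, Int.mul_ediv_cancel _ hD]
  rw [key, key]
  push_cast
  ring

lemma det_ne_zero (hind : ∀ m n : ℤ, m • u + n • v = 0 → m = 0 ∧ n = 0) :
    u.1*v.2 - u.2*v.1 ≠ 0 := by
  intro hD
  have h1 : v.1 • u + (-u.1) • v = 0 := by
    ext <;> simp only [Prod.fst_add, Prod.snd_add, Prod.smul_fst, Prod.smul_snd, smul_eq_mul,
      Prod.fst_zero, Prod.snd_zero] <;> linarith
  have h2 : v.2 • u + (-u.2) • v = 0 := by
    ext <;> simp only [Prod.fst_add, Prod.snd_add, Prod.smul_fst, Prod.smul_snd, smul_eq_mul,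
      Prod.fst_zero, Prod.snd_zero] <;> linarith
  obtain ⟨hv1, hu1⟩ := hind _ _ h1
  obtain ⟨hv2, hu2⟩ := hind _ _ h2
  have hu : u = 0 := by
    simp only [Prod.ext_iff, Prod.fst_zero, Prod.snd_zero]; omega
  have := hind 1 0 (by simp [hu])
  simp at this

section psiprops
variable (hD : u.1*v.2 - u.2*v.1 ≠ 0)
include hD

lemma psiZ_add_u (p : ℤ × ℤ) : psiZ u v (p + u) = psiZ u v p + 1 := by
  have := psiZ_add hD p 1 0
  simpa using this

lemma psiZ_add_v (p : ℤ × ℤ) : psiZ u v (p + v) = psiZ u v p - 1 := by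
  have := psiZ_add hD p 0 1
  simpa [sub_eq_add_neg] using this

lemma psiZ_sub_u (p : ℤ × ℤ) : psiZ u v (p + -u) = psiZ u v p - 1 := by
  have := psiZ_add hD p (-1) 0
  simpa [sub_eq_add_neg] using this

lemma psiZ_sub_v (p : ℤ × ℤ) : psiZ u v (p + -v) = psiZ u v p + 1 := by
  have := psiZ_add hD p 0 (-1)
  simpa [sub_eq_add_neg] using this

lemma psiZ_add_2u (p : ℤ × ℤ) : psiZ u v (p + (u + u)) = psiZ u v p + 2 := by
  have := psiZ_add hD p 2 0
  have h2 : (2:ℤ) • u + (0:ℤ) • v = u + u := by module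
  rw [h2] at this
  simpa using this

end psiprops

lemma zmod3_cases : ∀ x : ZMod 3, x = 0 ∨ x = 1 ∨ x = 2 := by decide

/-! ### Liminf lemmas -/

lemma tendsto_ratio (c : ℝ) :
    Tendsto (fun N : ℕ => (2*(N:ℝ)+c)^2/(3*(2*(N:ℝ)+1)^2)) atTop (nhds (1/3 : ℝ)) := by
  have hb : Tendsto (fun N : ℕ => 2*(N:ℝ)+1) atTop atTop := by
    apply tendsto_atTop_add_const_right
    exact (tendsto_natCast_atTop_atTop (R := ℝ)).const_mul_atTop (by norm_num)
  have hq : Tendsto (fun N : ℕ => (c-1)/(2*(N:ℝ)+1)) atTop (nhds 0) :=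
    Tendsto.div_atTop tendsto_const_nhds hb
  have key : Tendsto (fun N : ℕ => (1 + (c-1)/(2*(N:ℝ)+1))^2/3) atTop (nhds (1/3 : ℝ)) := by
    have := (((tendsto_const_nhds (x := (1:ℝ)) (f := atTop (α := ℕ))).add hq).pow 2).div_const 3
    norm_num at this
    convert this using 2
  refine key.congr (fun N => ?_)
  have hb0 : (2*(N:ℝ)+1) ≠ 0 := by positivity
  have h1 : 1 + (c-1)/(2*(N:ℝ)+1) = (2*(N:ℝ)+c)/(2*(N:ℝ)+1) := by
    field_simp
    ring
  rw [h1, div_pow, div_div, mul_comm ((2*(N:ℝ)+1)^2) 3]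

lemma liminf_ge_of_tendsto (f g : ℕ → ℝ) (hg : Tendsto g atTop (nhds (1/3 : ℝ)))
    (hf1 : ∀ N, f N ≤ 1) (h : ∀ᶠ N in atTop, g N ≤ f N) : 1/3 ≤ liminf f atTop := by
  have hcb : IsCoboundedUnder (· ≥ ·) atTop f :=
    (isBoundedUnder_of ⟨1, hf1⟩).isCoboundedUnder_ge
  calc (1/3 : ℝ) = liminf g atTop := hg.liminf_eq.symm
    _ ≤ liminf f atTop := liminf_le_liminf h hg.isBoundedUnder_ge hcb

lemma liminf_le_of_tendsto (f g : ℕ → ℝ) (hg : Tendsto g atTop (nhds (1/3 : ℝ)))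
    (hf0 : ∀ N, 0 ≤ f N) (h : ∀ᶠ N in atTop, f N ≤ g N) : liminf f atTop ≤ 1/3 := by
  calc liminf f atTop ≤ liminf g atTop :=
        liminf_le_liminf h (isBoundedUnder_of ⟨0, hf0⟩) hg.isCoboundedUnder_ge
    _ = 1/3 := hg.liminf_eq

lemma lowerDensity2_eq (X : Set (ℤ × ℤ)) :
    lowerDensity2 X = liminf (fun N : ℕ => ((X ∩ boxZ N).ncard : ℝ) / (2*(N:ℝ)+1)^2) atTop := by
  rfl

/-! ### Lower bound -/

lemma count_lower (X : Set (ℤ×ℤ)) (hX : Hits2 X {0, u, v}) (R N : ℕ)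
    (hu1 : |u.1| ≤ (R:ℤ)) (hu2 : |u.2| ≤ (R:ℤ)) (hv1 : |v.1| ≤ (R:ℤ)) (hv2 : |v.2| ≤ (R:ℤ)) :
    (2*N+1)^2 ≤ 3 * (X ∩ boxZ (N+R)).ncard := by
  set A0 := {p : ℤ×ℤ | p + 0 ∈ X} ∩ boxZ N with hA0
  set A1 := {p : ℤ×ℤ | p + u ∈ X} ∩ boxZ N with hA1
  set A2 := {p : ℤ×ℤ | p + v ∈ X} ∩ boxZ N with hA2
  have hcover : boxZ N ⊆ A0 ∪ A1 ∪ A2 := by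
    intro p hp
    obtain ⟨s, hs, hps⟩ := hX p
    rcases hs with rfl | rfl | rfl
    · exact Or.inl (Or.inl ⟨hps, hp⟩)
    · exact Or.inl (Or.inr ⟨hps, hp⟩)
    · exact Or.inr ⟨hps, hp⟩
  have hfin : (A0 ∪ A1 ∪ A2).Finite := by
    apply Set.Finite.union
    apply Set.Finite.union
    all_goals exact (boxZ_finite N).subset Set.inter_subset_right
  calc (2*N+1)^2 = (boxZ N).ncard := (boxZ_ncard N).symm
    _ ≤ (A0 ∪ A1 ∪ A2).ncard := Set.ncard_le_ncard hcover hfin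
    _ ≤ (A0 ∪ A1).ncard + A2.ncard := Set.ncard_union_le _ _
    _ ≤ A0.ncard + A1.ncard + A2.ncard := by
        have := Set.ncard_union_le A0 A1; omega
    _ ≤ 3 * (X ∩ boxZ (N+R)).ncard := by
        have h0 := translate_le X 0 R N (by simp) (by simp)
        have h1 := translate_le X u R N hu1 hu2
        have h2 := translate_le X v R N hv1 hv2
        rw [← hA0] at h0; rw [← hA1] at h1; rw [← hA2] at h2
        omega

lemma density_ge (X : Set (ℤ×ℤ)) (hX : Hits2 X {0, u, v}) : 1/3 ≤ lowerDensity2 X := by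
  set R : ℕ := (|u.1| + |u.2| + |v.1| + |v.2|).toNat with hRdef
  have hR : (R:ℤ) = |u.1| + |u.2| + |v.1| + |v.2| :=
    Int.toNat_of_nonneg (by positivity)
  have hu1 : |u.1| ≤ (R:ℤ) := by have := abs_nonneg u.2; have := abs_nonneg v.1; have := abs_nonneg v.2; linarith
  have hu2 : |u.2| ≤ (R:ℤ) := by have := abs_nonneg u.1; have := abs_nonneg v.1; have := abs_nonneg v.2; linarith
  have hv1 : |v.1| ≤ (R:ℤ) := by have := abs_nonneg u.1; have := abs_nonneg u.2; have := abs_nonneg v.2; linarith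
  have hv2 : |v.2| ≤ (R:ℤ) := by have := abs_nonneg u.1; have := abs_nonneg u.2; have := abs_nonneg v.1; linarith
  rw [lowerDensity2_eq]
  set f : ℕ → ℝ := fun N => ((X ∩ boxZ N).ncard : ℝ) / (2*(N:ℝ)+1)^2 with hf
  apply liminf_ge_of_tendsto f (fun N : ℕ => (2*(N:ℝ)+(1-2*R))^2/(3*(2*(N:ℝ)+1)^2))
    (tendsto_ratio _)
  · intro N
    rw [hf, div_le_one (by positivity)]
    have hle : (X ∩ boxZ N).ncard ≤ (boxZ N).ncard :=
      Set.ncard_le_ncard Set.inter_subset_right (boxZ_finite N)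
    rw [boxZ_ncard] at hle
    calc ((X ∩ boxZ N).ncard : ℝ) ≤ ((2*N+1)^2 : ℕ) := by exact_mod_cast hle
      _ = (2*(N:ℝ)+1)^2 := by push_cast; ring
  · filter_upwards [eventually_ge_atTop R] with N hRN
    have key := count_lower X hX R (N - R) hu1 hu2 hv1 hv2
    rw [Nat.sub_add_cancel hRN] at key
    have keyR : (2*((N:ℝ)-R)+1)^2 ≤ 3 * ((X ∩ boxZ N).ncard : ℝ) := by
      have : ((2*(N-R)+1)^2 : ℕ) ≤ ((3 * (X ∩ boxZ N).ncard : ℕ) : ℤ) := by exact_mod_cast key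
      calc (2*((N:ℝ)-R)+1)^2 = (((2*(N-R)+1)^2 : ℕ) : ℝ) := by
            push_cast [Nat.cast_sub hRN]; ring
        _ ≤ 3 * ((X ∩ boxZ N).ncard : ℝ) := by exact_mod_cast key
    rw [hf, div_le_div_iff₀ (by positivity) (by positivity)]
    have hexp : 2*(N:ℝ)+(1-2*R) = 2*((N:ℝ)-R)+1 := by ring
    rw [hexp]
    nlinarith [sq_nonneg (2*(N:ℝ)+1), sq_nonneg (2*((N:ℝ)-R)+1)]

/-! ### Upper bound -/

section upper
variable (hD : u.1*v.2 - u.2*v.1 ≠ 0)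
include hD

lemma count_upper (R N : ℕ)
    (hu1 : |u.1| ≤ (R:ℤ)) (hu2 : |u.2| ≤ (R:ℤ)) :
    3 * ({p | psiZ u v p = 0} ∩ boxZ N).ncard ≤ (2*(N+2*R)+1)^2 := by
  set X := {p : ℤ×ℤ | psiZ u v p = 0} with hX
  set M := N + 2*R with hM
  set A0 := {p : ℤ×ℤ | p + 0 ∈ X} ∩ boxZ M
  set A1 := {p : ℤ×ℤ | p + u ∈ X} ∩ boxZ M
  set A2 := {p : ℤ×ℤ | p + (u+u) ∈ X} ∩ boxZ M
  have hmem : ∀ p s, p + s ∈ X ↔ psiZ u v (p + s) = 0 := fun p s => Iff.rfl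
  -- disjointness
  have hd01 : Disjoint A0 A1 := by
    rw [Set.disjoint_left]
    rintro p ⟨h0, -⟩ ⟨h1, -⟩
    have e0 : psiZ u v (p + 0) = 0 := h0
    have e1 : psiZ u v (p + u) = 0 := h1
    rw [add_zero] at e0
    rw [psiZ_add_u hD, e0] at e1
    exact (by decide : (0:ZMod 3) + 1 ≠ 0) e1
  have hd02 : Disjoint A0 A2 := by
    rw [Set.disjoint_left]
    rintro p ⟨h0, -⟩ ⟨h2, -⟩
    have e0 : psiZ u v (p + 0) = 0 := h0
    have e2 : psiZ u v (p + (u + u)) = 0 := h2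
    rw [add_zero] at e0
    rw [psiZ_add_2u hD, e0] at e2
    exact (by decide : (0:ZMod 3) + 2 ≠ 0) e2
  have hd12 : Disjoint A1 A2 := by
    rw [Set.disjoint_left]
    rintro p ⟨h1, -⟩ ⟨h2, -⟩
    have e1 : psiZ u v (p + u) = 0 := h1
    have e2 : psiZ u v (p + (u + u)) = 0 := h2
    rw [psiZ_add_u hD] at e1
    rw [psiZ_add_2u hD] at e2
    have he : psiZ u v p + 1 = psiZ u v p + 2 := by rw [e1, e2]
    have h12 : (1 : ZMod 3) = 2 := add_left_cancel he
    exact (by decide : (1:ZMod 3) ≠ 2) h12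
  have hfin0 : A0.Finite := (boxZ_finite M).subset Set.inter_subset_right
  have hfin1 : A1.Finite := (boxZ_finite M).subset Set.inter_subset_right
  have hfin2 : A2.Finite := (boxZ_finite M).subset Set.inter_subset_right
  have hsub : A0 ∪ A1 ∪ A2 ⊆ boxZ M := by
    rintro p ((⟨-, hp⟩ | ⟨-, hp⟩) | ⟨-, hp⟩) <;> exact hp
  have hcard : A0.ncard + A1.ncard + A2.ncard ≤ (2*M+1)^2 := by
    have he1 : (A0 ∪ A1).ncard = A0.ncard + A1.ncard := Set.ncard_union_eq hd01 hfin0 hfin1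
    have he2 : (A0 ∪ A1 ∪ A2).ncard = (A0 ∪ A1).ncard + A2.ncard :=
      Set.ncard_union_eq (Set.disjoint_union_left.mpr ⟨hd02, hd12⟩) (hfin0.union hfin1) hfin2
    have := Set.ncard_le_ncard hsub (boxZ_finite M)
    rw [boxZ_ncard] at this
    omega
  -- each A_i is at least the count of X in box N
  have hge0 : (X ∩ boxZ N).ncard ≤ A0.ncard := by
    have := translate_ge X 0 (2*R) N (by simp) (by simp)
    simpa [A0, hM, Nat.cast_mul] using this
  have hge1 : (X ∩ boxZ N).ncard ≤ A1.ncard := by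
    have := translate_ge X u (2*R) N (by push_cast; linarith) (by push_cast; linarith)
    simpa [A1, hM] using this
  have hge2 : (X ∩ boxZ N).ncard ≤ A2.ncard := by
    have habs1 : |(u+u).1| ≤ ((2*R : ℕ):ℤ) := by
      have := abs_add_le u.1 u.1
      simp only [Prod.fst_add]
      push_cast
      linarith
    have habs2 : |(u+u).2| ≤ ((2*R : ℕ):ℤ) := by
      have := abs_add_le u.2 u.2
      simp only [Prod.snd_add]
      push_cast
      linarith
    have := translate_ge X (u+u) (2*R) N habs1 habs2
    simpa [A2, hM] using this
  omega

lemma density_le : lowerDensity2 {p : ℤ×ℤ | psiZ u v p = 0} ≤ 1/3 := by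
  set X := {p : ℤ×ℤ | psiZ u v p = 0} with hX
  set R : ℕ := (|u.1| + |u.2|).toNat with hRdef
  have hR : (R:ℤ) = |u.1| + |u.2| := Int.toNat_of_nonneg (by positivity)
  have hu1 : |u.1| ≤ (R:ℤ) := by have := abs_nonneg u.2; linarith
  have hu2 : |u.2| ≤ (R:ℤ) := by have := abs_nonneg u.1; linarith
  rw [lowerDensity2_eq]
  set f : ℕ → ℝ := fun N => ((X ∩ boxZ N).ncard : ℝ) / (2*(N:ℝ)+1)^2 with hf
  apply liminf_le_of_tendsto f (fun N : ℕ => (2*(N:ℝ)+(4*R+1))^2/(3*(2*(N:ℝ)+1)^2))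
    (tendsto_ratio _)
  · intro N; positivity
  · filter_upwards with N
    have key := count_upper hD R N hu1 hu2
    have keyR : 3 * ((X ∩ boxZ N).ncard : ℝ) ≤ (2*(N:ℝ)+(4*R+1))^2 := by
      calc 3 * ((X ∩ boxZ N).ncard : ℝ) = ((3 * (X ∩ boxZ N).ncard : ℕ) : ℝ) := by push_cast; ring
        _ ≤ (((2*(N+2*R)+1)^2 : ℕ) : ℝ) := by exact_mod_cast key
        _ = (2*(N:ℝ)+(4*R+1))^2 := by push_cast; ring
    rw [hf, div_le_div_iff₀ (by positivity) (by positivity)]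
    nlinarith [sq_nonneg (2*(N:ℝ)+1)]

lemma hits_S : Hits2 {p : ℤ×ℤ | psiZ u v p = 0} ({0, u, v} : Set (ℤ × ℤ)) := by
  intro n
  rcases zmod3_cases (psiZ u v n) with h | h | h
  · exact ⟨0, Set.mem_insert _ _, by simpa using h⟩
  · refine ⟨v, by simp, ?_⟩
    rw [Set.mem_setOf_eq, psiZ_add_v hD, h]
    decide
  · refine ⟨u, by simp, ?_⟩
    rw [Set.mem_setOf_eq, psiZ_add_u hD, h]
    decide

lemma hits_negS : Hits2 {p : ℤ×ℤ | psiZ u v p = 0} ({0, -u, -v} : Set (ℤ × ℤ)) := by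
  intro n
  rcases zmod3_cases (psiZ u v n) with h | h | h
  · exact ⟨0, Set.mem_insert _ _, by simpa using h⟩
  · refine ⟨-u, by simp, ?_⟩
    rw [Set.mem_setOf_eq, psiZ_sub_u hD, h]
    decide
  · refine ⟨-v, by simp, ?_⟩
    rw [Set.mem_setOf_eq, psiZ_sub_v hD, h]
    decide

end upper

end Stmt15Aux

open Stmt15Aux in
theorem stmt15 (u v : ℤ × ℤ) (hind : ∀ m n : ℤ, m • u + n • v = 0 → m = 0 ∧ n = 0) :
    piercing2 {({0, u, v} : Set (ℤ × ℤ)), ({0, -u, -v} : Set (ℤ × ℤ))} = 1 / 3 := by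
  have hD : u.1*v.2 - u.2*v.1 ≠ 0 := det_ne_zero hind
  set F : Set (Set (ℤ × ℤ)) := {({0, u, v} : Set (ℤ × ℤ)), ({0, -u, -v} : Set (ℤ × ℤ))} with hF
  set K : Set (Set (ℤ × ℤ)) := {X | ∀ S ∈ F, Hits2 X S} with hK
  have hXmem : {p : ℤ×ℤ | psiZ u v p = 0} ∈ K := by
    rintro S (rfl | rfl)
    · exact hits_S hD
    · exact hits_negS hD
  have hlow : ∀ y ∈ lowerDensity2 '' K, 1/3 ≤ y := by
    rintro y ⟨X, hXK, rfl⟩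
    exact density_ge X (hXK _ (Set.mem_insert _ _))
  have hbdd : BddBelow (lowerDensity2 '' K) := ⟨1/3, hlow⟩
  unfold piercing2
  apply le_antisymm
  · calc sInf (lowerDensity2 '' K) ≤ lowerDensity2 {p : ℤ×ℤ | psiZ u v p = 0} :=
        csInf_le hbdd ⟨_, hXmem, rfl⟩
      _ ≤ 1/3 := density_le hD
  · exact le_csInf ⟨_, ⟨_, hXmem, rfl⟩⟩ hlow
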